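/- For every h ∈ ℝ^d: sup_{x∈ℝ^d}(h·x − I(x)) = 0 if α*₀(h) ≤ 1, and sup_{x∈ℝ^d}(h·x − I(x)) = λ^{qu}_h if α*₀(h) > 1, where λ^{qu}_h is the unique λ > 0 with α*_λ(h) = 1 (such a λ exists and is unique when α*₀(h) > 1). -/

import Mathlib

open MeasureTheory ProbabilityTheory Filter Topology Set Pointwise

noncomputable section

namespace RWRP

/-- The `2d` unit steps in `ℤ^d`. -/
def unitSteps (d : ℕ) : Finset (Fin d → ℤ) :=
  (Finset.univ : Finset (Fin d × Bool)).image
    (fun p => fun j => if j = p.1 then (if p.2 then 1 else -1) else 0)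

/-- The uniform distribution on the `2d` unit steps of `ℤ^d`. -/
def stepDist (d : ℕ) : Measure (Fin d → ℤ) :=
  ((unitSteps d).card : ENNReal)⁻¹ • ∑ s ∈ unitSteps d, Measure.dirac s

/-- `S` is the symmetric nearest-neighbor random walk on `ℤ^d` under `P`, started at the
origin: `S 0 = 0` and the increments are i.i.d., uniformly distributed on the unit steps. -/
def IsSRW {d : ℕ} {Ω : Type*} [MeasurableSpace Ω] (P : Measure Ω)
    (S : ℕ → Ω → Fin d → ℤ) : Prop :=
  (∀ ω, S 0 ω = 0) ∧ (∀ n, Measurable (S n)) ∧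
    (∀ n, Measure.map (fun ω => S (n + 1) ω - S n ω) P = stepDist d) ∧
    iIndepFun (fun n ω => S (n + 1) ω - S n ω) P

/-- The `ℓ¹`-norm of a point of `ℤ^d`. -/
def norm1Z {d : ℕ} (x : Fin d → ℤ) : ℝ := ∑ i, |(x i : ℝ)|

/-- The `ℓ¹`-norm on `ℝ^d`. -/
def norm1R {d : ℕ} (x : Fin d → ℝ) : ℝ := ∑ i, |x i|

/-- The embedding `ℤ^d → ℝ^d`. -/
def zToR {d : ℕ} (x : Fin d → ℤ) : Fin d → ℝ := fun i => (x i : ℝ)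

/-- Euclidean scalar product on `ℝ^d`. -/
def dotR {d : ℕ} (h x : Fin d → ℝ) : ℝ := ∑ i, h i * x i

/-- `f` is a norm on `ℝ^d`. -/
def IsNorm {d : ℕ} (f : (Fin d → ℝ) → ℝ) : Prop :=
  (∀ x, 0 ≤ f x) ∧ (∀ x, f x = 0 ↔ x = 0) ∧
    (∀ (c : ℝ) (x), f (c • x) = |c| * f x) ∧ ∀ x y, f (x + y) ≤ f x + f y

/-- The dual norm `f*(ℓ) = sup_{x ≠ 0} (ℓ·x)/f(x)`. -/
def dualNorm {d : ℕ} (f : (Fin d → ℝ) → ℝ) (ℓ : Fin d → ℝ) : ℝ :=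
  ⨆ x : {x : Fin d → ℝ // x ≠ 0}, dotR ℓ x.1 / f x.1

/-- Number of visits of the walk to `x` during `1 ≤ m ≤ n`. -/
def localTime {d : ℕ} {Ω : Type*} (S : ℕ → Ω → Fin d → ℤ) (x : Fin d → ℤ) (n : ℕ)
    (ω : Ω) : ℕ :=
  ((Finset.Icc 1 n).filter (fun m => S m ω = x)).card

/-- Time of the first visit of the walk to the site `x`. -/
def hitTime {d : ℕ} {Ω : Type*} (S : ℕ → Ω → Fin d → ℤ) (x : Fin d → ℤ) (ω : Ω) : ℕ :=
  sInf {n : ℕ | S n ω = x}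

/-- The event that the walk ever visits the site `x`, i.e. `H(x) < ∞`. -/
def hits {d : ℕ} {Ω : Type*} (S : ℕ → Ω → Fin d → ℤ) (x : Fin d → ℤ) : Set Ω :=
  {ω | ∃ n, S n ω = x}

/-- Entrance time of the walk into the half-space `{x : ℓ·x ≥ u}`. -/
def hitHalf {d : ℕ} {Ω : Type*} (S : ℕ → Ω → Fin d → ℤ) (ℓ : Fin d → ℝ) (u : ℝ)
    (ω : Ω) : ℕ :=
  sInf {n : ℕ | u ≤ dotR ℓ (zToR (S n ω))}

/-- The annealed path potential `Φ(n) = Σ_{x ∈ ℤ^d} φ(l_x(n))`. -/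
def annPotential {d : ℕ} {Ω : Type*} (φ : ℝ → ℝ) (S : ℕ → Ω → Fin d → ℤ) (n : ℕ)
    (ω : Ω) : ℝ :=
  ∑' x : Fin d → ℤ, φ (localTime S x n ω)

/-- Assumptions (An) on the annealed potential shape function `φ`. -/
def IsGoodPhi (φ : ℝ → ℝ) : Prop :=
  φ 0 = 0 ∧ (∀ t, 0 ≤ t → 0 ≤ φ t) ∧ MonotoneOn φ (Ici 0) ∧ ConcaveOn ℝ (Ici 0) φ ∧
    (∃ t, 0 ≤ t ∧ φ t ≠ 0) ∧ Tendsto (fun t => φ t / t) atTop (𝓝 0)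

/-- The annealed two-point function `b_λ(x)`. -/
def twoPointB {d : ℕ} {Ω : Type*} [MeasurableSpace Ω] (P : Measure Ω) (φ : ℝ → ℝ)
    (S : ℕ → Ω → Fin d → ℤ) (lam : ℝ) (x : Fin d → ℤ) : ℝ :=
  -Real.log (∫ ω, Set.indicator (hits S x)
    (fun ω' => Real.exp (-(lam * (hitTime S x ω' : ℝ))
      - annPotential φ S (hitTime S x ω') ω')) ω ∂P)

/-- The quenched path potential `Ψ(n,ω) = Σ_{1 ≤ m ≤ n} V_{S(m)}(ω)`. -/
def quPotential {d : ℕ} {Ω Ωe : Type*} (V : (Fin d → ℤ) → Ωe → ℝ)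
    (S : ℕ → Ω → Fin d → ℤ) (n : ℕ) (ωe : Ωe) (ω : Ω) : ℝ :=
  ∑ m ∈ Finset.Icc 1 n, V (S m ω) ωe

/-- The quenched two-point function `a_λ(x,ω)`. -/
def twoPointA {d : ℕ} {Ω Ωe : Type*} [MeasurableSpace Ω] (P : Measure Ω)
    (V : (Fin d → ℤ) → Ωe → ℝ) (S : ℕ → Ω → Fin d → ℤ) (lam : ℝ) (x : Fin d → ℤ)
    (ωe : Ωe) : ℝ :=
  -Real.log (∫ ω, Set.indicator (hits S x)
    (fun ω' => Real.exp (-(lam * (hitTime S x ω' : ℝ))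
      - quPotential V S (hitTime S x ω') ωe ω')) ω ∂P)

/-- Assumptions (Qu) on the random potential `𝕍 = (V_x)`: i.i.d., nonnegative, nontrivial,
in `L^d`, with essential infimum `0`. -/
def IsIIDPotential {d : ℕ} {Ωe : Type*} [MeasurableSpace Ωe] (μ : Measure Ωe)
    (V : (Fin d → ℤ) → Ωe → ℝ) : Prop :=
  (∀ x, Measurable (V x)) ∧
    (∀ x, ∀ᵐ ωe ∂μ, 0 ≤ V x ωe) ∧
    iIndepFun V μ ∧
    (∀ x, Measure.map (V x) μ = Measure.map (V 0) μ) ∧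
    (¬∃ c : ℝ, V 0 =ᵐ[μ] fun _ => c) ∧
    MemLp (V 0) d μ ∧
    essInf (V 0) μ = 0

/-- The quenched shape theorem property for the family `α` of Lyapunov norms:
`a_λ(x_k, ·)/α_λ(x_k) → 1` almost surely along any `‖x_k‖₁ → ∞`. -/
def QuShape {d : ℕ} {Ω Ωe : Type*} [MeasurableSpace Ω] [MeasurableSpace Ωe]
    (P : Measure Ω) (μ : Measure Ωe) (V : (Fin d → ℤ) → Ωe → ℝ)
    (S : ℕ → Ω → Fin d → ℤ) (α : ℝ → (Fin d → ℝ) → ℝ) : Prop :=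
  ∀ lam : ℝ, 0 ≤ lam → ∃ F : Set Ωe, μ Fᶜ = 0 ∧
    ∀ ωe ∈ F, ∀ xs : ℕ → Fin d → ℤ, Tendsto (fun k => norm1Z (xs k)) atTop atTop →
      Tendsto (fun k => twoPointA P V S lam (xs k) ωe / α lam (zToR (xs k))) atTop (𝓝 1)

/-- The annealed shape theorem property for the family `β` of Lyapunov norms:
`b_λ(x_k)/β_λ(x_k) → 1` along any `‖x_k‖₁ → ∞`. -/
def AnShape {d : ℕ} {Ω : Type*} [MeasurableSpace Ω] (P : Measure Ω) (φ : ℝ → ℝ)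
    (S : ℕ → Ω → Fin d → ℤ) (β : ℝ → (Fin d → ℝ) → ℝ) : Prop :=
  ∀ lam : ℝ, 0 ≤ lam → ∀ xs : ℕ → Fin d → ℤ,
    Tendsto (fun k => norm1Z (xs k)) atTop atTop →
      Tendsto (fun k => twoPointB P φ S lam (xs k) / β lam (zToR (xs k))) atTop (𝓝 1)

/-- The rate function `x ↦ sup_{λ ≥ 0} (β_λ(x) − λ)`, with values in `EReal`. -/
def rateFn {d : ℕ} (β : ℝ → (Fin d → ℝ) → ℝ) (x : Fin d → ℝ) : EReal :=
  ⨆ (lam : ℝ) (_ : 0 ≤ lam), ((β lam x - lam : ℝ) : EReal)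

/-- The free energy `sup_{x ∈ ℝ^d} (h·x − I(x))`, with values in `EReal`. -/
def freeEnergySup {d : ℕ} (β : ℝ → (Fin d → ℝ) → ℝ) (h : Fin d → ℝ) : EReal :=
  ⨆ x : Fin d → ℝ, ((dotR h x : ℝ) : EReal) - rateFn β x

/-- The tilted rate function `x ↦ I(x) − h·x + sup_y (h·y − I(y))`. -/
def tiltedRate {d : ℕ} (β : ℝ → (Fin d → ℝ) → ℝ) (h x : Fin d → ℝ) : EReal :=
  rateFn β x - ((dotR h x : ℝ) : EReal) + freeEnergySup β h

/-- The annealed partition function `Z_n^h`. -/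
def Zan {d : ℕ} {Ω : Type*} [MeasurableSpace Ω] (P : Measure Ω) (φ : ℝ → ℝ)
    (S : ℕ → Ω → Fin d → ℤ) (h : Fin d → ℝ) (n : ℕ) : ℝ :=
  ∫ ω, Real.exp (dotR h (zToR (S n ω)) - annPotential φ S n ω) ∂P

/-- The annealed path measure `Q_n^h`, as an `ℝ≥0∞`-valued set function. -/
def Qan {d : ℕ} {Ω : Type*} [MeasurableSpace Ω] (P : Measure Ω) (φ : ℝ → ℝ)
    (S : ℕ → Ω → Fin d → ℤ) (h : Fin d → ℝ) (n : ℕ) (B : Set Ω) : ENNReal :=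
  (∫⁻ ω in B, ENNReal.ofReal (Real.exp (dotR h (zToR (S n ω)) - annPotential φ S n ω)) ∂P) /
    ∫⁻ ω, ENNReal.ofReal (Real.exp (dotR h (zToR (S n ω)) - annPotential φ S n ω)) ∂P

/-- The quenched partition function `Z_{n,ω}^h`. -/
def Zqu {d : ℕ} {Ω Ωe : Type*} [MeasurableSpace Ω] (P : Measure Ω)
    (V : (Fin d → ℤ) → Ωe → ℝ) (S : ℕ → Ω → Fin d → ℤ) (h : Fin d → ℝ) (n : ℕ)
    (ωe : Ωe) : ℝ :=
  ∫ ω, Real.exp (dotR h (zToR (S n ω)) - quPotential V S n ωe ω) ∂P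

/-- The quenched path measure `Q_{n,ω}^h`, as an `ℝ≥0∞`-valued set function. -/
def Qqu {d : ℕ} {Ω Ωe : Type*} [MeasurableSpace Ω] (P : Measure Ω)
    (V : (Fin d → ℤ) → Ωe → ℝ) (S : ℕ → Ω → Fin d → ℤ) (h : Fin d → ℝ) (n : ℕ)
    (ωe : Ωe) (B : Set Ω) : ENNReal :=
  (∫⁻ ω in B, ENNReal.ofReal (Real.exp (dotR h (zToR (S n ω)) - quPotential V S n ωe ω)) ∂P) /
    ∫⁻ ω, ENNReal.ofReal (Real.exp (dotR h (zToR (S n ω)) - quPotential V S n ωe ω)) ∂P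

section FreeEnergyHelpers

variable {d : ℕ}

lemma norm1R_nonneg (x : Fin d → ℝ) : 0 ≤ norm1R x :=
  Finset.sum_nonneg fun _ _ => abs_nonneg _

lemma norm1R_eq_zero {x : Fin d → ℝ} : norm1R x = 0 ↔ x = 0 := by
  constructor
  · intro hx; funext i
    have := (Finset.sum_eq_zero_iff_of_nonneg (fun i _ => abs_nonneg (x i))).1 hx i
      (Finset.mem_univ i)
    simpa [abs_eq_zero] using this
  · rintro rfl; simp [norm1R]

lemma norm1R_zero : norm1R (0 : Fin d → ℝ) = 0 := by simp [norm1R]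

lemma dotR_zero' (h : Fin d → ℝ) : dotR h 0 = 0 := by simp [dotR]

lemma dotR_smul' (h : Fin d → ℝ) (c : ℝ) (x : Fin d → ℝ) : dotR h (c • x) = c * dotR h x := by
  simp only [dotR, Pi.smul_apply, smul_eq_mul, Finset.mul_sum]
  exact Finset.sum_congr rfl fun i _ => by ring

lemma dotR_le_norm (h x : Fin d → ℝ) : dotR h x ≤ norm1R h * norm1R x := by
  calc dotR h x ≤ ∑ i, |h i| * |x i| :=
        Finset.sum_le_sum fun i _ => le_of_le_of_eq (le_abs_self _) (abs_mul _ _)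
  _ ≤ ∑ i, |h i| * norm1R x := Finset.sum_le_sum fun i _ =>
        mul_le_mul_of_nonneg_left
          (Finset.single_le_sum (fun j _ => abs_nonneg (x j)) (Finset.mem_univ i))
          (abs_nonneg _)
  _ = norm1R h * norm1R x := by simp [norm1R, Finset.sum_mul]

lemma ereal_sub_le {a r c : ℝ} {B : EReal} (h1 : (r : EReal) ≤ B) (h2 : a - r ≤ c) :
    (a : EReal) - B ≤ (c : EReal) := by
  induction B with
  | bot => exact absurd h1 (EReal.bot_lt_coe r).not_ge
  | coe b =>
    rw [← EReal.coe_sub]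
    exact EReal.coe_le_coe_iff.2 (by have := EReal.coe_le_coe_iff.1 h1; linarith)
  | top => rw [EReal.sub_top]; exact bot_le

lemma ereal_le_sub {a r c : ℝ} {B : EReal} (h1 : B ≤ (r : EReal)) (h2 : B ≠ ⊥)
    (h3 : c ≤ a - r) : (c : EReal) ≤ (a : EReal) - B := by
  induction B with
  | bot => exact absurd rfl h2
  | coe b =>
    rw [← EReal.coe_sub]
    exact EReal.coe_le_coe_iff.2 (by have := EReal.coe_le_coe_iff.1 h1; linarith)
  | top => exact absurd h1 (EReal.coe_lt_top r).not_ge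

lemma ereal_real {x : EReal} (h1 : x ≠ ⊥) (h2 : x ≠ ⊤) : ∃ r : ℝ, x = (r : EReal) := by
  induction x with
  | bot => exact absurd rfl h1
  | coe a => exact ⟨a, rfl⟩
  | top => exact absurd rfl h2

end FreeEnergyHelpers

set_option maxHeartbeats 2000000 in
/-- **Identification of the quenched free energy** (Flury, (31)). For every `h`,
`sup_x (h·x − I(x)) = 0` when `α*₀(h) ≤ 1`, and `= λ^{qu}_h` when `α*₀(h) > 1`, where
`λ^{qu}_h` is the unique `λ > 0` with `α*_λ(h) = 1`. -/
theorem quenched_free_energy_identification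
    {d : ℕ} (hd : 0 < d)
    {Ωe : Type*} [MeasurableSpace Ωe] (μ : Measure Ωe) [IsProbabilityMeasure μ]
    (V : (Fin d → ℤ) → Ωe → ℝ) (hV : IsIIDPotential μ V)
    (α : ℝ → (Fin d → ℝ) → ℝ)
    (hαnorm : ∀ lam : ℝ, 0 ≤ lam → IsNorm (α lam))
    (hαcont : ContinuousOn (fun p : ℝ × (Fin d → ℝ) => α p.1 p.2) (Ici 0 ×ˢ univ))
    (hαconc : ∀ x : Fin d → ℝ, ConcaveOn ℝ (Ici 0) (fun lam => α lam x))
    (hαsmono : ∀ x : Fin d → ℝ, x ≠ 0 → StrictMonoOn (fun lam => α lam x) (Ici 0))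
    (hαbounds : ∀ lam : ℝ, 0 ≤ lam → ∀ x : Fin d → ℝ,
      norm1R x * (lam - Real.log (∫ ωe, Real.exp (-V 0 ωe) ∂μ)) ≤ α lam x ∧
        α lam x ≤ norm1R x * (lam + Real.log (2 * (d : ℝ)) + ∫ ωe, V 0 ωe ∂μ)) :
    ∀ h : Fin d → ℝ,
      (dualNorm (α 0) h ≤ 1 → freeEnergySup α h = 0) ∧
      (1 < dualNorm (α 0) h →
        ∃ lamq : ℝ, 0 < lamq ∧ dualNorm (α lamq) h = 1 ∧
          (∀ lam' : ℝ, 0 < lam' → dualNorm (α lam') h = 1 → lam' = lamq) ∧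
          freeEnergySup α h = (lamq : EReal)) := by
  classical
  -- notation for the constants in the bounds
  set C₀ : ℝ := Real.log (∫ ωe, Real.exp (-V 0 ωe) ∂μ) with hC₀def
  set C₁ : ℝ := Real.log (2 * (d : ℝ)) + ∫ ωe, V 0 ωe ∂μ with hC₁def
  -- C₀ < 0
  have hmeas : Measurable fun ωe => Real.exp (-V 0 ωe) :=
    Real.continuous_exp.measurable.comp (hV.1 0).neg
  have hle1 : ∀ᵐ ωe ∂μ, Real.exp (-V 0 ωe) ≤ 1 := by
    filter_upwards [hV.2.1 0] with ωe hωe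
    exact Real.exp_le_one_iff.2 (neg_nonpos.2 hωe)
  have hint : Integrable (fun ωe => Real.exp (-V 0 ωe)) μ := by
    refine Integrable.mono' (integrable_const 1) hmeas.aestronglyMeasurable ?_
    filter_upwards [hle1] with ωe h1
    rw [Real.norm_eq_abs, abs_of_pos (Real.exp_pos _)]; exact h1
  have hI1 : ∫ ωe, Real.exp (-V 0 ωe) ∂μ ≤ 1 := by
    calc ∫ ωe, Real.exp (-V 0 ωe) ∂μ ≤ ∫ _ωe, (1 : ℝ) ∂μ :=
          integral_mono_ae hint (integrable_const 1) hle1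
    _ = 1 := by simp
  have hIne : ∫ ωe, Real.exp (-V 0 ωe) ∂μ ≠ 1 := by
    intro heq
    apply hV.2.2.2.2.1
    refine ⟨0, ?_⟩
    have h0 : ∫ ωe, (1 - Real.exp (-V 0 ωe)) ∂μ = 0 := by
      rw [integral_sub (integrable_const 1) hint]; simp [heq]
    have hz := (integral_eq_zero_iff_of_nonneg_ae
        (by filter_upwards [hle1] with ωe h1; simpa using sub_nonneg.2 h1)
        ((integrable_const 1).sub hint)).1 h0
    filter_upwards [hz, hV.2.1 0] with ωe he _
    have hexp : Real.exp (-V 0 ωe) = 1 := by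
      have : (1 : ℝ) - Real.exp (-V 0 ωe) = 0 := he
      linarith
    have := (Real.exp_eq_one_iff _).1 hexp
    linarith [this]
  have hIpos : 0 < ∫ ωe, Real.exp (-V 0 ωe) ∂μ := by
    rcases (integral_nonneg (f := fun ωe => Real.exp (-V 0 ωe)) (fun _ => (Real.exp_pos _).le)).lt_or_eq with h' | h'
    · exact h'
    · exfalso
      have hz := (integral_eq_zero_iff_of_nonneg_ae
          (Filter.Eventually.of_forall fun ωe => (Real.exp_pos (-V 0 ωe)).le) hint).1 h'.symm
      obtain ⟨ωe, hωe⟩ := hz.exists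
      exact (Real.exp_pos (-V 0 ωe)).ne' hωe
  have hC₀neg : C₀ < 0 := Real.log_neg hIpos (lt_of_le_of_ne hI1 hIne)
  -- basic facts about α
  have hlow : ∀ lam : ℝ, 0 ≤ lam → ∀ x, norm1R x * (lam - C₀) ≤ α lam x :=
    fun lam hlam x => (hαbounds lam hlam x).1
  have hup : ∀ lam : ℝ, 0 ≤ lam → ∀ x, α lam x ≤ norm1R x * (lam + C₁) :=
    fun lam hlam x => by
      have := (hαbounds lam hlam x).2
      calc α lam x ≤ norm1R x * (lam + Real.log (2 * (d : ℝ)) + ∫ ωe, V 0 ωe ∂μ) := this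
      _ = norm1R x * (lam + C₁) := by rw [hC₁def]; ring
  have hzero : ∀ lam : ℝ, 0 ≤ lam → α lam 0 = 0 := fun lam hlam =>
    ((hαnorm lam hlam).2.1 0).2 rfl
  have hpos : ∀ lam : ℝ, 0 ≤ lam → ∀ x, x ≠ 0 → 0 < α lam x := fun lam hlam x hx =>
    lt_of_le_of_ne ((hαnorm lam hlam).1 x)
      (fun he => hx (((hαnorm lam hlam).2.1 x).1 he.symm))
  have hmono : ∀ (x : Fin d → ℝ) (lam lam' : ℝ), 0 ≤ lam → lam ≤ lam' →
      α lam x ≤ α lam' x := by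
    intro x lam lam' hlam hle
    by_cases hx : x = 0
    · subst hx; rw [hzero lam hlam, hzero lam' (hlam.trans hle)]
    · rcases eq_or_lt_of_le hle with rfl | hlt
      · exact le_refl _
      · exact le_of_lt ((hαsmono x hx) (mem_Ici.2 hlam) (mem_Ici.2 (hlam.trans hle)) hlt)
  have hsmul : ∀ lam : ℝ, 0 ≤ lam → ∀ (c : ℝ) (x), α lam (c • x) = |c| * α lam x :=
    fun lam hlam => (hαnorm lam hlam).2.2.1
  have hlowpos : ∀ lam : ℝ, 0 ≤ lam → ∀ x, (lam - C₀) * norm1R x ≤ α lam x := by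
    intro lam hlam x
    calc (lam - C₀) * norm1R x = norm1R x * (lam - C₀) := mul_comm _ _
    _ ≤ α lam x := hlow lam hlam x
  -- a canonical nonzero vector
  have hune : (fun j : Fin d => if j = ⟨0, hd⟩ then (1:ℝ) else 0) ≠ 0 := by
    intro hcon
    have := congrFun hcon ⟨0, hd⟩
    simp at this
  haveI hne : Nonempty {x : Fin d → ℝ // x ≠ 0} := ⟨⟨_, hune⟩⟩
  intro h
  -- boundedness of the dual norm ratios
  have hbdd : ∀ lam : ℝ, 0 ≤ lam →
      BddAbove (Set.range fun x : {x : Fin d → ℝ // x ≠ 0} => dotR h x.1 / α lam x.1) := by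
    intro lam hlam
    refine ⟨norm1R h / (lam - C₀), ?_⟩
    rintro _ ⟨⟨x, hx⟩, rfl⟩
    have hc : 0 < lam - C₀ := by linarith
    rw [div_le_iff₀ (hpos lam hlam x hx)]
    calc dotR h x ≤ norm1R h * norm1R x := dotR_le_norm h x
    _ = norm1R h / (lam - C₀) * ((lam - C₀) * norm1R x) := by field_simp
    _ ≤ norm1R h / (lam - C₀) * α lam x :=
        mul_le_mul_of_nonneg_left (hlowpos lam hlam x)
          (div_nonneg (norm1R_nonneg h) hc.le)
  have le_dual : ∀ lam : ℝ, 0 ≤ lam → ∀ x : Fin d → ℝ, x ≠ 0 →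
      dotR h x ≤ dualNorm (α lam) h * α lam x := by
    intro lam hlam x hx
    have h1 : dotR h x / α lam x ≤ dualNorm (α lam) h :=
      le_ciSup (hbdd lam hlam) (⟨x, hx⟩ : {x : Fin d → ℝ // x ≠ 0})
    have := (div_le_iff₀ (hpos lam hlam x hx)).1 h1
    linarith
  have dual_le : ∀ lam g : ℝ, 0 ≤ lam → (∀ x, dotR h x ≤ g * α lam x) →
      dualNorm (α lam) h ≤ g := by
    intro lam g hlam hbound
    refine ciSup_le fun x => ?_
    rw [div_le_iff₀ (hpos lam hlam x.1 x.2)]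
    exact hbound x.1
  -- rate function facts
  have hrate_ge : ∀ (x : Fin d → ℝ) (lam : ℝ), 0 ≤ lam →
      ((α lam x - lam : ℝ) : EReal) ≤ rateFn α x := by
    intro x lam hlam
    exact le_iSup₂ (f := fun (lam : ℝ) (_ : 0 ≤ lam) => ((α lam x - lam : ℝ) : EReal)) lam hlam
  have hrate_le : ∀ (x : Fin d → ℝ) (c : ℝ), (∀ lam : ℝ, 0 ≤ lam → α lam x - lam ≤ c) →
      rateFn α x ≤ (c : EReal) := by
    intro x c hc
    exact iSup_le fun lam => iSup_le fun hlam => EReal.coe_le_coe_iff.2 (hc lam hlam)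
  have hrate_nebot : ∀ x : Fin d → ℝ, rateFn α x ≠ ⊥ := by
    intro x hb
    have := hrate_ge x 0 le_rfl
    rw [hb, le_bot_iff] at this
    exact EReal.coe_ne_bot _ this
  have hrate0 : rateFn α 0 = 0 := by
    apply le_antisymm
    · refine iSup_le fun lam => iSup_le fun hlam => ?_
      rw [hzero lam hlam, ← EReal.coe_zero]
      exact EReal.coe_le_coe_iff.2 (by linarith)
    · have := hrate_ge 0 0 le_rfl
      rw [hzero 0 le_rfl] at this
      simpa using this
  have hF0 : ((dotR h 0 : ℝ) : EReal) - rateFn α 0 = 0 := by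
    rw [dotR_zero', hrate0]
    simp
  constructor
  · -- case α*₀(h) ≤ 1
    intro hdual
    have hdot0 : ∀ x, dotR h x ≤ α 0 x := by
      intro x
      by_cases hx : x = 0
      · rw [hx, dotR_zero', hzero 0 le_rfl]
      · calc dotR h x ≤ dualNorm (α 0) h * α 0 x := le_dual 0 le_rfl x hx
        _ ≤ 1 * α 0 x := mul_le_mul_of_nonneg_right hdual ((hαnorm 0 le_rfl).1 x)
        _ = α 0 x := one_mul _
    apply le_antisymm
    · refine iSup_le fun x => ?_
      have h1 : ((α 0 x - 0 : ℝ) : EReal) ≤ rateFn α x := hrate_ge x 0 le_rfl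
      have h2 : dotR h x - (α 0 x - 0) ≤ (0 : ℝ) := by linarith [hdot0 x]
      have := ereal_sub_le h1 h2
      rwa [EReal.coe_zero] at this
    · rw [← hF0]
      exact le_iSup (fun x => ((dotR h x : ℝ) : EReal) - rateFn α x) 0
  · -- case α*₀(h) > 1
    intro hdual1
    set A : Set ℝ := {lam | 0 ≤ lam ∧ ∀ x, dotR h x ≤ α lam x} with hAdef
    have hAne : A.Nonempty := by
      refine ⟨norm1R h + 1, by linarith [norm1R_nonneg h], fun x => ?_⟩
      calc dotR h x ≤ norm1R h * norm1R x := dotR_le_norm h x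
      _ ≤ norm1R x * (norm1R h + 1 - C₀) := by
          nlinarith [norm1R_nonneg x, norm1R_nonneg h, hC₀neg]
      _ ≤ α (norm1R h + 1) x := hlow _ (by linarith [norm1R_nonneg h]) x
    have hAbdd : BddBelow A := ⟨0, fun a ha => ha.1⟩
    set lamq := sInf A with hlamqdef
    have hlamq0 : 0 ≤ lamq := le_csInf hAne fun a ha => ha.1
    -- continuity of α in λ for fixed x
    have hcx : ∀ x : Fin d → ℝ, ContinuousOn (fun lam => α lam x) (Ici 0) := by
      intro x
      have : ContinuousOn ((fun p : ℝ × (Fin d → ℝ) => α p.1 p.2) ∘ fun lam => (lam, x))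
          (Ici 0) :=
        ContinuousOn.comp hαcont
          ((continuous_id.prodMk continuous_const).continuousOn)
          (fun lam hlam => ⟨hlam, mem_univ x⟩)
      exact this
    -- lamq ∈ A
    have hmem : ∀ x, dotR h x ≤ α lamq x := by
      intro x
      have hseq : ∀ n : ℕ, ∃ a ∈ A, a < lamq + 1 / ((n : ℝ) + 1) := fun n =>
        exists_lt_of_csInf_lt hAne (lt_add_of_pos_right lamq (by positivity))
      choose a ha hlt using hseq
      have htend : Tendsto a atTop (𝓝 lamq) := by
        have h2 : Tendsto (fun n : ℕ => lamq + 1 / ((n : ℝ) + 1)) atTop (𝓝 lamq) := by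
          have := tendsto_one_div_add_atTop_nhds_zero_nat (𝕜 := ℝ)
          simpa using tendsto_const_nhds.add this
        exact tendsto_of_tendsto_of_tendsto_of_le_of_le tendsto_const_nhds h2
          (fun n => csInf_le hAbdd (ha n)) (fun n => (hlt n).le)
      have htendα : Tendsto (fun n => α (a n) x) atTop (𝓝 (α lamq x)) := by
        refine Tendsto.comp (hcx x lamq (mem_Ici.2 hlamq0)) ?_
        rw [tendsto_nhdsWithin_iff]
        exact ⟨htend, Filter.Eventually.of_forall fun n => mem_Ici.2 (ha n).1⟩
      exact ge_of_tendsto htendα (Filter.Eventually.of_forall fun n => (ha n).2 x)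
    have hdualle : dualNorm (α lamq) h ≤ 1 :=
      dual_le lamq 1 hlamq0 (fun x => by rw [one_mul]; exact hmem x)
    have hlamqpos : 0 < lamq := by
      rcases hlamq0.lt_or_eq with h' | h'
      · exact h'
      · exfalso; rw [← h'] at hdualle; exact absurd hdual1 (not_lt.2 hdualle)
    -- the dual norm at lamq is ≥ 1
    have hdualge : 1 ≤ dualNorm (α lamq) h := by
      by_contra hlt
      push_neg at hlt
      set g : ℝ := max (dualNorm (α lamq) h) 0 with hgdef
      have hg1 : g < 1 := max_lt hlt one_pos
      have hg0 : 0 ≤ g := le_max_right _ _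
      have hgb : ∀ x, dotR h x ≤ g * α lamq x := by
        intro x
        by_cases hx : x = 0
        · rw [hx, dotR_zero', hzero lamq hlamq0, mul_zero]
        · exact (le_dual lamq hlamq0 x hx).trans
            (mul_le_mul_of_nonneg_right (le_max_left _ _) ((hαnorm lamq hlamq0).1 x))
      set K : ℝ := |lamq + C₁| with hKdef
      have hK0 : 0 ≤ K := abs_nonneg _
      set L : ℝ := 2 * K / lamq with hLdef
      have hL0 : 0 ≤ L := by rw [hLdef]; exact div_nonneg (by linarith [hK0]) hlamqpos.le
      have hLl : L * lamq = 2 * K := by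
        rw [hLdef]; field_simp
      have hlip : ∀ lam : ℝ, lamq / 2 ≤ lam → lam < lamq → ∀ x,
          α lamq x ≤ α lam x + (lamq - lam) * L * norm1R x := by
        intro lam h1 h2 x
        have hlam0 : 0 ≤ lam := le_trans (by linarith) h1
        by_cases hx : x = 0
        · rw [hx, hzero lamq hlamq0, hzero lam hlam0, norm1R_zero]; simp
        · have h0lam : 0 < lam := lt_of_lt_of_le (by linarith) h1
          have hs := (hαconc x).slope_anti_adjacent (mem_Ici.2 le_rfl)
            (mem_Ici.2 hlamq0) h0lam h2
          have hNx := norm1R_nonneg x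
          have hb1 : α lam x - α 0 x ≤ K * norm1R x := by
            have hA1 := hup lamq hlamq0 x
            have hA2 := hmono x lam lamq hlam0 h2.le
            have hA3 := (hαnorm 0 le_rfl).1 x
            have hA4 : norm1R x * (lamq + C₁) ≤ norm1R x * K :=
              mul_le_mul_of_nonneg_left (le_abs_self _) hNx
            nlinarith
          have hQ : (α lam x - α 0 x) / (lam - 0) ≤ L * norm1R x := by
            rw [sub_zero, div_le_iff₀ h0lam]
            have hh : L * norm1R x * (lamq / 2) ≤ L * norm1R x * lam :=
              mul_le_mul_of_nonneg_left h1 (mul_nonneg hL0 hNx)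
            have hKN : K * norm1R x = L * norm1R x * (lamq / 2) := by
              rw [hLdef]; field_simp
            linarith [hb1, hh, hKN]
          have hD : 0 < lamq - lam := by linarith
          rw [div_le_iff₀ hD] at hs
          have := mul_le_mul_of_nonneg_right hQ hD.le
          linarith [hs, this]
      set cc : ℝ := lamq / 2 - C₀ with hccdef
      have hccpos : 0 < cc := by
        rw [hccdef]; linarith
      have hgL : 0 < g * L + 1 := by nlinarith [mul_nonneg hg0 hL0]
      set ε : ℝ := min (lamq / 2) ((1 - g) * cc / (g * L + 1)) with hεdef
      have hεpos : 0 < ε :=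
        lt_min (by linarith) (div_pos (mul_pos (by linarith) hccpos) hgL)
      have hεle : ε * (g * L + 1) ≤ (1 - g) * cc := by
        have := min_le_right (lamq / 2) ((1 - g) * cc / (g * L + 1))
        rw [← hεdef] at this
        rw [← le_div_iff₀ hgL]
        exact this
      have hε2 : ε ≤ lamq / 2 := min_le_left _ _
      set lam : ℝ := lamq - ε with hlamdef
      have h1 : lamq / 2 ≤ lam := by rw [hlamdef]; linarith
      have h2 : lam < lamq := by rw [hlamdef]; linarith
      have hlam0 : 0 ≤ lam := by rw [hlamdef]; linarith
      have hmemlam : lam ∈ A := by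
        refine ⟨hlam0, fun x => ?_⟩
        have hl := hlip lam h1 h2 x
        have hNx := norm1R_nonneg x
        have hlb : cc * norm1R x ≤ α lam x := by
          have hA := hlowpos lam hlam0 x
          have : cc ≤ lam - C₀ := by rw [hccdef]; linarith
          nlinarith
        have hAA : cc * norm1R x * (1 - g) ≤ α lam x * (1 - g) :=
          mul_le_mul_of_nonneg_right hlb (by linarith)
        have hBB : ε * (g * L + 1) * norm1R x ≤ (1 - g) * cc * norm1R x :=
          mul_le_mul_of_nonneg_right hεle hNx
        have hCC : 0 ≤ ε * norm1R x := mul_nonneg hεpos.le hNx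
        calc dotR h x ≤ g * α lamq x := hgb x
        _ ≤ g * (α lam x + (lamq - lam) * L * norm1R x) :=
            mul_le_mul_of_nonneg_left hl hg0
        _ ≤ α lam x := by
            have hεeq : lamq - lam = ε := by rw [hlamdef]; ring
            rw [hεeq]
            nlinarith [hAA, hBB, hCC]
      have := csInf_le hAbdd hmemlam
      rw [← hlamqdef, hlamdef] at this
      linarith
    have hdualq : dualNorm (α lamq) h = 1 := le_antisymm hdualle hdualge
    -- uniqueness
    have huniq : ∀ lam' : ℝ, 0 < lam' → dualNorm (α lam') h = 1 → lam' = lamq := by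
      intro lam' hl'pos hl'dual
      have hl'A : lam' ∈ A := by
        refine ⟨hl'pos.le, fun x => ?_⟩
        by_cases hx : x = 0
        · rw [hx, dotR_zero', hzero lam' hl'pos.le]
        · have := le_dual lam' hl'pos.le x hx
          rw [hl'dual, one_mul] at this
          exact this
      have hge : lamq ≤ lam' := csInf_le hAbdd hl'A
      rcases hge.lt_or_eq with hlt | heq
      · exfalso
        set Λ : ℝ := max (lam' + 1) (lamq + 2 * C₀ + 2 * C₁) with hΛdef
        have hΛ1 : lam' + 1 ≤ Λ := le_max_left _ _
        have hΛ2 : lamq + 2 * C₀ + 2 * C₁ ≤ Λ := le_max_right _ _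
        have hΛlam' : lam' < Λ := by linarith
        have hΛ0 : (0:ℝ) ≤ Λ := by linarith
        have hgap : ∀ x, α lamq x + (lam' - lamq) / 2 * norm1R x ≤ α lam' x := by
          intro x
          by_cases hx : x = 0
          · rw [hx, hzero lamq hlamq0, hzero lam' hl'pos.le, norm1R_zero]; simp
          · have hu : 0 < lam' - lamq := sub_pos.2 hlt
            have hv : 0 < Λ - lam' := sub_pos.2 hΛlam'
            have hs := (hαconc x).slope_anti_adjacent (mem_Ici.2 hlamq0)
              (mem_Ici.2 hΛ0) hlt hΛlam'
            rw [div_le_div_iff₀ hv hu] at hs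
            have hNx := norm1R_nonneg x
            have hkey : norm1R x * (Λ - lamq) / 2 ≤ α Λ x - α lamq x := by
              have hA1 := hlow Λ hΛ0 x
              have hA2 := hup lamq hlamq0 x
              have hA3 : norm1R x * (lamq + 2 * C₀ + 2 * C₁) ≤ norm1R x * Λ :=
                mul_le_mul_of_nonneg_left hΛ2 hNx
              nlinarith
            have hcomb : (α Λ x - α lamq x) * (lam' - lamq) ≤
                (α lam' x - α lamq x) * (Λ - lamq) := by nlinarith [hs]
            have hfin : norm1R x * (Λ - lamq) / 2 * (lam' - lamq) ≤
                (α lam' x - α lamq x) * (Λ - lamq) :=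
              le_trans (mul_le_mul_of_nonneg_right hkey hu.le) hcomb
            have hΛq : 0 < Λ - lamq := by linarith
            nlinarith [hfin, hΛq]
        set δ : ℝ := (lam' - lamq) / 2 with hδdef
        have hδpos : 0 < δ := by rw [hδdef]; linarith
        set M : ℝ := max (lam' + C₁) 1 with hMdef
        have hM1 : (1:ℝ) ≤ M := le_max_right _ _
        have hMpos : 0 < M := by linarith
        have hforall : ∀ x, dotR h x ≤ (1 - δ / M) * α lam' x := by
          intro x
          have h1 := hmem x
          have h2 := hgap x
          have hNx := norm1R_nonneg x
          have h3 : α lam' x ≤ norm1R x * M :=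
            le_trans (hup lam' hl'pos.le x)
              (mul_le_mul_of_nonneg_left (le_max_left _ _) hNx)
          have h4 : δ / M * α lam' x ≤ δ * norm1R x := by
            rw [div_mul_eq_mul_div, div_le_iff₀ hMpos]
            nlinarith
          nlinarith
        have hcontra := dual_le lam' (1 - δ / M) hl'pos.le hforall
        rw [hl'dual] at hcontra
        have : 0 < δ / M := div_pos hδpos hMpos
        linarith
      · exact heq.symm
    -- upper bound for the free energy
    have hFle : freeEnergySup α h ≤ (lamq : EReal) := by
      refine iSup_le fun x => ?_
      exact ereal_sub_le (hrate_ge x lamq hlamq0) (by linarith [hmem x])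
    -- lower bound for the free energy
    have hFge : ∀ l₁ : ℝ, 0 < l₁ → l₁ < lamq → (l₁ : EReal) ≤ freeEnergySup α h := by
      intro l₁ hl₁ hl₁q
      set l₂ : ℝ := (l₁ + lamq) / 2 with hl₂def
      have hl₂pos : 0 < l₂ := by rw [hl₂def]; linarith
      have hl₁l₂ : l₁ < l₂ := by rw [hl₂def]; linarith
      have hl₂q : l₂ < lamq := by rw [hl₂def]; linarith
      have hl₂nA : l₂ ∉ A := by
        intro hmem'
        have := csInf_le hAbdd hmem'
        rw [← hlamqdef] at this
        linarith
      have hex : ∃ x, ¬ dotR h x ≤ α l₂ x := by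
        by_contra hno
        push_neg at hno
        exact hl₂nA ⟨hl₂pos.le, hno⟩
      obtain ⟨x, hx'⟩ := hex
      push_neg at hx'
      have hxne : x ≠ 0 := by
        rintro rfl
        rw [dotR_zero', hzero l₂ hl₂pos.le] at hx'
        exact lt_irrefl 0 hx'
      set s : ℝ := (α l₂ x - α l₁ x) / (l₂ - l₁) with hsdef
      have hspos : 0 < s := by
        apply div_pos _ (by linarith)
        exact sub_pos.2 ((hαsmono x hxne) (mem_Ici.2 hl₁.le) (mem_Ici.2 hl₂pos.le) hl₁l₂)
      have hglobal : ∀ lam : ℝ, 0 ≤ lam → α lam x ≤ α l₂ x + s * (lam - l₁) := by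
        intro lam hlam
        rcases lt_trichotomy lam l₁ with hc | hc | hc
        · have hs2 := (hαconc x).slope_anti_adjacent (mem_Ici.2 hlam)
            (mem_Ici.2 hl₂pos.le) hc hl₁l₂
          rw [← hsdef, le_div_iff₀ (by linarith : (0:ℝ) < l₁ - lam)] at hs2
          have := hmono x l₁ l₂ hl₁.le hl₁l₂.le
          nlinarith
        · subst hc
          have := hmono x lam l₂ hlam hl₁l₂.le
          nlinarith
        · rcases lt_trichotomy lam l₂ with hc2 | hc2 | hc2
          · have := hmono x lam l₂ hlam hc2.le
            nlinarith [hspos]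
          · subst hc2; nlinarith [hspos]
          · have hs3 := (hαconc x).slope_anti_adjacent (mem_Ici.2 hl₁.le)
              (mem_Ici.2 hlam) hl₁l₂ hc2
            rw [← hsdef, div_le_iff₀ (by linarith : (0:ℝ) < lam - l₂)] at hs3
            nlinarith [hspos]
      set x' : Fin d → ℝ := s⁻¹ • x with hx'def
      have hdotx' : dotR h x' = s⁻¹ * dotR h x := dotR_smul' h s⁻¹ x
      have hαx' : ∀ lam : ℝ, 0 ≤ lam → α lam x' = s⁻¹ * α lam x := by
        intro lam hlam
        rw [hx'def, hsmul lam hlam, abs_of_pos (inv_pos.2 hspos)]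
      set R : ℝ := s⁻¹ * α l₂ x - l₁ with hRdef
      have hrateR : rateFn α x' ≤ (R : EReal) := by
        refine hrate_le x' R fun lam hlam => ?_
        rw [hαx' lam hlam, hRdef]
        have hG := hglobal lam hlam
        have hs1 : s⁻¹ * s = 1 := inv_mul_cancel₀ hspos.ne'
        have := mul_le_mul_of_nonneg_left hG (inv_pos.2 hspos).le
        nlinarith [this]
      have hle' : (l₁ : EReal) ≤ ((dotR h x' : ℝ) : EReal) - rateFn α x' := by
        refine ereal_le_sub hrateR (hrate_nebot x') ?_
        rw [hdotx', hRdef]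
        nlinarith [mul_pos (inv_pos.2 hspos) (sub_pos.2 hx')]
      exact le_trans hle'
        (le_iSup (fun x => ((dotR h x : ℝ) : EReal) - rateFn α x) x')
    have hFne : ∃ r : ℝ, freeEnergySup α h = (r : EReal) := by
      have h1 := hFge (lamq / 2) (by linarith) (by linarith)
      refine ereal_real ?_ ?_
      · intro hb; rw [hb, le_bot_iff] at h1; exact EReal.coe_ne_bot _ h1
      · intro ht; rw [ht] at hFle; exact absurd hFle (EReal.coe_lt_top lamq).not_ge
    obtain ⟨r, hr⟩ := hFne
    have hrle : r ≤ lamq := EReal.coe_le_coe_iff.1 (hr ▸ hFle)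
    have hrge : ∀ l₁ : ℝ, 0 < l₁ → l₁ < lamq → l₁ ≤ r := fun l₁ a b =>
      EReal.coe_le_coe_iff.1 (hr ▸ hFge l₁ a b)
    have hreq : r = lamq := by
      by_contra hneq
      have hrlt : r < lamq := lt_of_le_of_ne hrle hneq
      have hml : max r (lamq / 2) < lamq := max_lt hrlt (by linarith)
      set l₁ : ℝ := (max r (lamq / 2) + lamq) / 2 with hl₁def
      have h1 : 0 < l₁ := by
        have := le_max_right r (lamq / 2)
        rw [hl₁def]; linarith
      have h2 : l₁ < lamq := by rw [hl₁def]; linarith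
      have h3 : r < l₁ := by
        have := le_max_left r (lamq / 2)
        rw [hl₁def]; linarith
      exact absurd (hrge l₁ h1 h2) (not_le.2 h3)
    exact ⟨lamq, hlamqpos, hdualq, huniq, by rw [hr, hreq]⟩

end RWRP
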